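/- Let W_p > 0 and W_n > 0 be real numbers, and set v* = W_p/(W_p + W_n). Then the function g : ℝ → ℝ given by g(v) = W_p·ln(1 + exp(−v)) + max{0, W_n·ln(1 + exp(v))} attains its minimum over ℝ at v = ln(W_p/W_n), and the minimum value equals (W_p + W_n)·(−v*·ln v* − (1−v*)·ln(1−v*)). (Proposition 2(b), case 0 < v* < 1: closed form of the minimum nnPU partial empirical risk under the logistic loss.) -/

import Mathlib

private lemma gibbs_aux (Wp Wn x : ℝ) (hWp : 0 < Wp) (hWn : 0 < Wn)
    (hx : 0 < x) (hx1 : x < 1) :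
    -(Wp * Real.log (Wp / (Wp + Wn))) - Wn * Real.log (Wn / (Wp + Wn)) ≤
      -(Wp * Real.log x) - Wn * Real.log (1 - x) := by
  have hS : 0 < Wp + Wn := by linarith
  have h1x : 0 < 1 - x := by linarith
  have h1 : Real.log (x * (Wp + Wn) / Wp) ≤ x * (Wp + Wn) / Wp - 1 :=
    Real.log_le_sub_one_of_pos (by positivity)
  have h2 : Real.log ((1 - x) * (Wp + Wn) / Wn) ≤ (1 - x) * (Wp + Wn) / Wn - 1 :=
    Real.log_le_sub_one_of_pos (by positivity)
  rw [Real.log_div (by positivity) (by positivity),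
    Real.log_mul (by positivity) (by positivity)] at h1
  rw [Real.log_div (by positivity) (by positivity),
    Real.log_mul (by positivity) (by positivity)] at h2
  rw [Real.log_div (by positivity) (by positivity),
    Real.log_div (by positivity) (by positivity)]
  have e1 : Wp * (x * (Wp + Wn) / Wp - 1) = x * (Wp + Wn) - Wp := by field_simp
  have e2 : Wn * ((1 - x) * (Wp + Wn) / Wn - 1) = (1 - x) * (Wp + Wn) - Wn := by field_simp
  nlinarith [mul_le_mul_of_nonneg_left h1 hWp.le, mul_le_mul_of_nonneg_left h2 hWn.le]

private lemma log_one_add_exp_neg (u : ℝ) :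
    Real.log (1 + Real.exp (-u)) = Real.log (1 + Real.exp u) - u := by
  have h : (1 : ℝ) + Real.exp (-u) = (1 + Real.exp u) * Real.exp (-u) := by
    rw [add_mul, one_mul, ← Real.exp_add]; simp [add_comm]
  rw [h, Real.log_mul (by positivity) (Real.exp_ne_zero _), Real.log_exp]; ring

/-- Proposition 2(b), case `0 < v* < 1`: the nnPU logistic objective
`g v = Wp*ln(1+exp(-v)) + max{0, Wn*ln(1+exp v)}`, with `Wp, Wn > 0`, attains its
minimum at `v = ln(Wp/Wn)`, with minimum value
`(Wp+Wn)(-v* ln v* - (1-v*) ln(1-v*))`, `v* = Wp/(Wp+Wn)`. -/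
theorem nnPU_logistic_min (Wp Wn : ℝ) (hWp : 0 < Wp) (hWn : 0 < Wn) :
    (∀ u : ℝ,
        Wp * Real.log (1 + Real.exp (-Real.log (Wp / Wn)))
            + max 0 (Wn * Real.log (1 + Real.exp (Real.log (Wp / Wn)))) ≤
          Wp * Real.log (1 + Real.exp (-u)) + max 0 (Wn * Real.log (1 + Real.exp u))) ∧
    Wp * Real.log (1 + Real.exp (-Real.log (Wp / Wn)))
        + max 0 (Wn * Real.log (1 + Real.exp (Real.log (Wp / Wn)))) =
      (Wp + Wn) * (-(Wp / (Wp + Wn)) * Real.log (Wp / (Wp + Wn))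
        - (1 - Wp / (Wp + Wn)) * Real.log (1 - Wp / (Wp + Wn))) := by
  have hS : 0 < Wp + Wn := by linarith
  have hmax : ∀ u : ℝ, max 0 (Wn * Real.log (1 + Real.exp u)) = Wn * Real.log (1 + Real.exp u) := by
    intro u
    refine max_eq_right (mul_nonneg hWn.le (Real.log_nonneg ?_))
    linarith [Real.exp_pos u]
  have hexp : Real.exp (Real.log (Wp / Wn)) = Wp / Wn := Real.exp_log (by positivity)
  -- value at the minimizer
  have hval : Wp * Real.log (1 + Real.exp (-Real.log (Wp / Wn)))
      + max 0 (Wn * Real.log (1 + Real.exp (Real.log (Wp / Wn)))) =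
      -(Wp * Real.log (Wp / (Wp + Wn))) - Wn * Real.log (Wn / (Wp + Wn)) := by
    rw [hmax, log_one_add_exp_neg, hexp]
    have h1 : (1 : ℝ) + Wp / Wn = (Wp + Wn) / Wn := by field_simp; ring
    rw [h1, Real.log_div (by positivity) (by positivity),
      Real.log_div (by positivity) (by positivity),
      Real.log_div (by positivity) (by positivity),
      Real.log_div (by positivity) (by positivity)]
    ring
  constructor
  · intro u
    rw [hval, hmax, log_one_add_exp_neg]
    set x : ℝ := Real.exp u / (1 + Real.exp u) with hxdef
    have hexpu := Real.exp_pos u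
    have hx : 0 < x := by positivity
    have hx1 : x < 1 := by
      rw [hxdef, div_lt_one (by positivity)]; linarith
    have hlogx : Real.log x = u - Real.log (1 + Real.exp u) := by
      rw [hxdef, Real.log_div (by positivity) (by positivity), Real.log_exp]
    have h1mx : (1 : ℝ) - x = 1 / (1 + Real.exp u) := by
      rw [hxdef]; field_simp; ring
    have hlog1mx : Real.log (1 - x) = -Real.log (1 + Real.exp u) := by
      rw [h1mx, Real.log_div (by norm_num) (by positivity), Real.log_one]; ring
    have := gibbs_aux Wp Wn x hWp hWn hx hx1
    rw [hlogx, hlog1mx] at this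
    linarith
  · rw [hval]
    have h2 : (1 : ℝ) - Wp / (Wp + Wn) = Wn / (Wp + Wn) := by field_simp; ring
    rw [h2]
    field_simp
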